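/- If λ ≥ 1, then for every real x, the orbit f_λⁿ(x) converges to 0 as n → ∞, where f_λ(x) = sin(x)/(x² + λ). -/
import Mathlib

theorem stmt_3 (lam : ℝ) (hl : 1 ≤ lam) (x : ℝ) :
    Filter.Tendsto (fun n : ℕ => (fun t : ℝ => Real.sin t / (t ^ 2 + lam))^[n] x)
      Filter.atTop (nhds 0) := by
  set f : ℝ → ℝ := fun t : ℝ => Real.sin t / (t ^ 2 + lam) with hf
  have hden : ∀ t : ℝ, (1 : ℝ) ≤ t ^ 2 + lam := fun t => by nlinarith [sq_nonneg t]
  -- one-step bound: (f t)^2 ≤ t^2 / (t^2+1)^2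
  have step : ∀ t : ℝ, (f t) ^ 2 ≤ t ^ 2 / (t ^ 2 + 1) ^ 2 := by
    intro t
    have h1 : Real.sin t ^ 2 ≤ t ^ 2 := Real.sin_sq_le_sq
    have h2 : (t ^ 2 + 1) ^ 2 ≤ (t ^ 2 + lam) ^ 2 := by nlinarith [sq_nonneg t, hden t]
    have hpos : (0:ℝ) < (t ^ 2 + 1) ^ 2 := by positivity
    have hpos2 : (0:ℝ) < (t ^ 2 + lam) ^ 2 := by nlinarith [hden t]
    have : (f t) ^ 2 = Real.sin t ^ 2 / (t ^ 2 + lam) ^ 2 := by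
      simp [hf, div_pow]
    rw [this]
    exact div_le_div₀ (sq_nonneg t) h1 hpos h2
  -- key bound: (f^[n+1] x)^2 ≤ 1/(n+1)
  have key : ∀ n : ℕ, (f^[n+1] x) ^ 2 ≤ 1 / (n + 1 : ℝ) := by
    intro n
    induction n with
    | zero =>
      have := step x
      have h1 : x ^ 2 / (x ^ 2 + 1) ^ 2 ≤ 1 := by
        rw [div_le_one (by positivity)]
        nlinarith [sq_nonneg x]
      simpa using this.trans h1
    | succ n ih =>
      have hiter : f^[n+2] x = f (f^[n+1] x) := Function.iterate_succ_apply' f (n+1) x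
      set a := f^[n+1] x with ha
      have h1 : (f a) ^ 2 ≤ a ^ 2 / (a ^ 2 + 1) ^ 2 := step a
      have hn1 : (0:ℝ) < (n:ℝ) + 1 := by positivity
      have hb : a ^ 2 ≤ 1 / ((n:ℝ) + 1) := ih
      have h2 : a ^ 2 / (a ^ 2 + 1) ^ 2 ≤ 1 / ((n:ℝ) + 2) := by
        rw [div_le_div_iff₀ (by positivity) (by positivity)]
        have hbb : a ^ 2 * ((n:ℝ)+1) ≤ 1 := by
          have := (le_div_iff₀ hn1).mp hb
          linarith
        nlinarith [sq_nonneg a, sq_nonneg (a^2 * ((n:ℝ)+1) - 1), sq_nonneg (a^2)]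
      rw [hiter]
      calc (f a) ^ 2 ≤ 1 / ((n:ℝ) + 2) := h1.trans h2
        _ = 1 / ((n + 1 : ℕ) + 1 : ℝ) := by push_cast; ring_nf
  -- squeeze: (f^[n] x)^2 → 0
  have hsq : Filter.Tendsto (fun n : ℕ => (f^[n] x) ^ 2) Filter.atTop (nhds 0) := by
    apply squeeze_zero' (g := fun n : ℕ => 1 / (n : ℝ))
      (Filter.Eventually.of_forall fun n => sq_nonneg _)
    · filter_upwards [Filter.eventually_ge_atTop 1] with n hn
      obtain ⟨m, rfl⟩ := Nat.exists_eq_add_of_le hn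
      calc (f^[1+m] x) ^ 2 = (f^[m+1] x) ^ 2 := by rw [Nat.add_comm]
        _ ≤ 1 / (m + 1 : ℝ) := key m
        _ = 1 / ((1 + m : ℕ) : ℝ) := by push_cast; ring_nf
    · exact tendsto_one_div_atTop_nhds_zero_nat
  -- conclude
  have habs : Filter.Tendsto (fun n : ℕ => |f^[n] x|) Filter.atTop (nhds 0) := by
    have := (Real.continuous_sqrt.tendsto 0).comp hsq
    simpa [Function.comp_def, Real.sqrt_sq_eq_abs] using this
  exact tendsto_zero_iff_abs_tendsto_zero _ |>.mpr habs
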